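/- Reproduction of the power of maximal degree: for every integer p ≥ 2 and every t ∈ ℝ, one has t^{p−1} = Σ_{k∈ℤ} [ Π_{i=1−⌊p/2⌋}^{⌈p/2⌉−1} x_{k+i} ] · φ_k^[p](t), where the sum has only finitely many nonzero terms. -/

import Mathlib

/-- B-splines of order `p` on the strictly increasing knot sequence `x : ℤ → ℝ`,
defined by the recursion of Definition 2 of the paper.  `Bspline x p k` is the
B-spline of order `p` (degree `p-1`) associated with the knot `x k`. -/
noncomputable def Bspline (x : ℤ → ℝ) : ℕ → ℤ → ℝ → ℝ
  | 0, _, _ => 0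
  | 1, k, t => if x k ≤ t ∧ t < x (k + 1) then 1 else 0
  | p + 2, k, t =>
      ((t - x (k - ((p + 2) / 2 : ℕ))) /
          (x (k + ((p + 3) / 2 : ℕ) - 1) - x (k - ((p + 2) / 2 : ℕ)))) *
        Bspline x (p + 1) (k - 1 + ((p + 2) % 2 : ℕ)) t +
      ((x (k + ((p + 3) / 2 : ℕ)) - t) /
          (x (k + ((p + 3) / 2 : ℕ)) - x (k - ((p + 2) / 2 : ℕ) + 1))) *
        Bspline x (p + 1) (k + ((p + 2) % 2 : ℕ)) t

lemma bspline_support (x : ℤ → ℝ) (hx : Monotone x) :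
    ∀ (p : ℕ) (k : ℤ) (t : ℝ), Bspline x p k t ≠ 0 →
      x (k - ((p / 2 : ℕ) : ℤ)) ≤ t ∧ t < x (k + (((p + 1) / 2 : ℕ) : ℤ))
  | 0, k, t, h => absurd rfl h
  | 1, k, t, h => by
      simp only [Bspline] at h
      split_ifs at h with hc
      · refine ⟨le_trans (hx (by omega)) hc.1, lt_of_lt_of_le hc.2 (hx (by omega))⟩
      · exact absurd rfl h
  | p + 2, k, t, h => by
      have h1 : Bspline x (p + 1) (k - 1 + ((p + 2) % 2 : ℕ)) t ≠ 0 ∨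
          Bspline x (p + 1) (k + ((p + 2) % 2 : ℕ)) t ≠ 0 := by
        by_contra hc
        push_neg at hc
        simp only [Bspline, hc.1, hc.2, mul_zero, add_zero, ne_eq, not_true_eq_false] at h
      rcases h1 with h1 | h1
      · obtain ⟨ha, hb⟩ := bspline_support x hx (p + 1) _ t h1
        exact ⟨le_trans (hx (by omega)) ha, lt_of_lt_of_le hb (hx (by omega))⟩
      · obtain ⟨ha, hb⟩ := bspline_support x hx (p + 1) _ t h1
        exact ⟨le_trans (hx (by omega)) ha, lt_of_lt_of_le hb (hx (by omega))⟩

lemma exists_knot_interval (x : ℤ → ℝ) (hx : StrictMono x)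
    (htop : Filter.Tendsto x Filter.atTop Filter.atTop)
    (hbot : Filter.Tendsto x Filter.atBot Filter.atBot) (t : ℝ) :
    ∃ j : ℤ, x j ≤ t ∧ t < x (j + 1) := by
  obtain ⟨a, ha⟩ : ∃ a : ℤ, x a ≤ t := (hbot.eventually (Filter.eventually_le_atBot t)).exists
  obtain ⟨b, hb⟩ : ∃ b : ℤ, t < x b := (htop.eventually (Filter.eventually_gt_atTop t)).exists
  have hbdd : ∀ z : ℤ, z ∈ {k : ℤ | x k ≤ t} → z ≤ b := by
    intro z hz
    exact le_of_lt (hx.lt_iff_lt.mp (lt_of_le_of_lt hz hb))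
  obtain ⟨j, hj, hmax⟩ := Int.exists_greatest_of_bdd ⟨b, hbdd⟩ ⟨a, ha⟩
  refine ⟨j, hj, ?_⟩
  by_contra hc
  push_neg at hc
  have := hmax (j + 1) hc
  omega

lemma bspline_finite (x : ℤ → ℝ) (hx : StrictMono x)
    (htop : Filter.Tendsto x Filter.atTop Filter.atTop)
    (hbot : Filter.Tendsto x Filter.atBot Filter.atBot) (p : ℕ) (t : ℝ) :
    {k : ℤ | Bspline x p k t ≠ 0}.Finite := by
  obtain ⟨j, hj1, hj2⟩ := exists_knot_interval x hx htop hbot t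
  refine (Set.finite_Icc (j - p) (j + p)).subset ?_
  intro k hk
  obtain ⟨ha, hb⟩ := bspline_support x hx.monotone p k t hk
  have h1 : (k - ((p / 2 : ℕ) : ℤ)) < j + 1 := hx.lt_iff_lt.mp (lt_of_le_of_lt ha hj2)
  have h2 : j < k + (((p + 1) / 2 : ℕ) : ℤ) := hx.lt_iff_lt.mp (lt_of_le_of_lt hj1 hb)
  simp only [Set.mem_Icc]
  omega

lemma mul_bspline_finite (x : ℤ → ℝ) (hx : StrictMono x)
    (htop : Filter.Tendsto x Filter.atTop Filter.atTop)
    (hbot : Filter.Tendsto x Filter.atBot Filter.atBot) (p : ℕ) (t : ℝ)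
    (f : ℤ → ℝ) (d : ℤ) :
    (Function.support fun k : ℤ => f k * Bspline x p (k + d) t).Finite := by
  refine Set.Finite.subset (Set.Finite.preimage (Set.injOn_of_injective
      (add_left_injective d)) (bspline_finite x hx htop hbot p t)) ?_
  intro k hk
  simp only [Function.mem_support] at hk
  simp only [Set.mem_preimage, Set.mem_setOf_eq]
  exact fun h0 => hk (by rw [h0, mul_zero])

noncomputable def knotProd (x : ℤ → ℝ) (L U k : ℤ) : ℝ := ∏ i ∈ Finset.Icc L U, x (k + i)

lemma knotProd_shift (x : ℤ → ℝ) (L U k d : ℤ) :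
    knotProd x L U (k + d) = knotProd x (L + d) (U + d) k := by
  unfold knotProd
  rw [← Finset.map_add_right_Icc, Finset.prod_map]
  refine Finset.prod_congr rfl fun i _ => ?_
  simp only [addRightEmbedding_apply]
  ring_nf

lemma knotProd_top (x : ℤ → ℝ) (L U k : ℤ) (h : L ≤ U + 1) :
    knotProd x L (U + 1) k = knotProd x L U k * x (k + (U + 1)) := by
  unfold knotProd
  rw [show Finset.Icc L (U + 1) = insert (U + 1) (Finset.Icc L U) by
    ext i; simp only [Finset.mem_Icc, Finset.mem_insert]; omega]
  rw [Finset.prod_insert (by simp only [Finset.mem_Icc]; omega)]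
  ring

lemma knotProd_bot (x : ℤ → ℝ) (L U k : ℤ) (h : L - 1 ≤ U) :
    knotProd x (L - 1) U k = x (k + (L - 1)) * knotProd x L U k := by
  unfold knotProd
  rw [show Finset.Icc (L - 1) U = insert (L - 1) (Finset.Icc L U) by
    ext i; simp only [Finset.mem_Icc, Finset.mem_insert]; omega]
  rw [Finset.prod_insert (by simp only [Finset.mem_Icc]; omega)]

lemma step_even (x : ℤ → ℝ) (hx : StrictMono x)
    (htop : Filter.Tendsto x Filter.atTop Filter.atTop)
    (hbot : Filter.Tendsto x Filter.atBot Filter.atBot) (t : ℝ) (q : ℕ)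
    (IH : ∑ᶠ k : ℤ, knotProd x (1 - (q : ℤ)) ((q : ℤ)) k * Bspline x (q + q + 1) k t
      = t ^ (q + q)) :
    ∑ᶠ k : ℤ, knotProd x (-(q : ℤ)) ((q : ℤ)) k * Bspline x (q + q + 2) k t
      = t ^ (q + q + 1) := by
  have hfin : ∀ (f : ℤ → ℝ) (d : ℤ),
      (Function.support fun k : ℤ => f k * Bspline x (q + q + 1) (k + d) t).Finite :=
    mul_bspline_finite x hx htop hbot (q + q + 1) t
  have hfin2 : ∀ (g : ℤ → ℝ) (d : ℤ),
      (∀ k : ℤ, Bspline x (q + q + 1) (k + d) t = 0 → g k = 0) →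
      (Function.support g).Finite := by
    intro g d h
    refine Set.Finite.subset (Set.Finite.preimage (Set.injOn_of_injective
      (add_left_injective d)) (bspline_finite x hx htop hbot (q + q + 1) t)) ?_
    intro k hk
    simp only [Set.mem_preimage, Set.mem_setOf_eq]
    intro h0
    exact hk (h k h0)
  simp only [Bspline]
  simp only [show (q + q + 2) / 2 = q + 1 from by omega,
    show (q + q + 3) / 2 = q + 1 from by omega,
    show (q + q + 2) % 2 = 0 from by omega]
  push_cast
  have e1 : ∀ k : ℤ, knotProd x (-(q : ℤ)) ((q : ℤ)) k *
      ((t - x (k - ((q : ℤ) + 1))) / (x (k + ((q : ℤ) + 1) - 1) - x (k - ((q : ℤ) + 1))) *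
        Bspline x (q + q + 1) (k - 1 + 0) t +
      (x (k + ((q : ℤ) + 1)) - t) / (x (k + ((q : ℤ) + 1)) - x (k - ((q : ℤ) + 1) + 1)) *
        Bspline x (q + q + 1) (k + 0) t) =
      (fun k : ℤ => (knotProd x (-(q : ℤ)) ((q : ℤ)) k *
        ((t - x (k - ((q : ℤ) + 1))) / (x (k + ((q : ℤ) + 1) - 1) - x (k - ((q : ℤ) + 1))))) *
        Bspline x (q + q + 1) (k + (-1)) t) k +
      (fun k : ℤ => (knotProd x (-(q : ℤ)) ((q : ℤ)) k *
        ((x (k + ((q : ℤ) + 1)) - t) / (x (k + ((q : ℤ) + 1)) - x (k - ((q : ℤ) + 1) + 1)))) *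
        Bspline x (q + q + 1) (k + 0) t) k := by
    intro k
    simp only []
    rw [show k + (-1 : ℤ) = k - 1 + 0 by ring]
    ring
  rw [finsum_congr e1, finsum_add_distrib (hfin _ (-1)) (hfin _ 0),
    ← finsum_comp_equiv (Equiv.addRight (1 : ℤ))]
  simp only [Equiv.coe_addRight]
  rw [← finsum_add_distrib
    (hfin2 _ 0 (fun k h0 => by
      rw [show k + (0 : ℤ) = k + 1 + -1 by ring] at h0
      rw [h0, mul_zero]))
    (hfin2 _ 0 (fun k h0 => by rw [h0, mul_zero]))]
  have key : ∀ i : ℤ,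
      knotProd x (-(q : ℤ)) ((q : ℤ)) (i + 1) *
        ((t - x (i + 1 - ((q : ℤ) + 1))) /
          (x (i + 1 + ((q : ℤ) + 1) - 1) - x (i + 1 - ((q : ℤ) + 1)))) *
        Bspline x (q + q + 1) (i + 1 + -1) t +
      knotProd x (-(q : ℤ)) ((q : ℤ)) i *
        ((x (i + ((q : ℤ) + 1)) - t) / (x (i + ((q : ℤ) + 1)) - x (i - ((q : ℤ) + 1) + 1))) *
        Bspline x (q + q + 1) (i + 0) t =
      t * (knotProd x (1 - (q : ℤ)) ((q : ℤ)) i * Bspline x (q + q + 1) i t) := by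
    intro i
    rw [show i + 1 + (-1 : ℤ) = i by ring, show i + (0 : ℤ) = i by ring,
      show i + 1 - ((q : ℤ) + 1) = i - q by ring,
      show i + 1 + ((q : ℤ) + 1) - 1 = i + ((q : ℤ) + 1) by ring,
      show i - ((q : ℤ) + 1) + 1 = i - q by ring]
    rw [knotProd_shift x (-(q : ℤ)) ((q : ℤ)) i 1,
      knotProd_top x (-(q : ℤ) + 1) ((q : ℤ)) i (by omega)]
    rw [show knotProd x (-(q : ℤ)) ((q : ℤ)) i
        = x (i - (q : ℤ)) * knotProd x (1 - (q : ℤ)) ((q : ℤ)) i by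
      rw [show -(q : ℤ) = (1 - (q : ℤ)) - 1 by ring,
        knotProd_bot x (1 - (q : ℤ)) ((q : ℤ)) i (by omega),
        show i + (1 - (q : ℤ) - 1) = i - (q : ℤ) by ring]]
    rw [show -(q : ℤ) + 1 = 1 - (q : ℤ) by ring]
    have h0 : x (i + ((q : ℤ) + 1)) - x (i - (q : ℤ)) ≠ 0 :=
      sub_ne_zero.mpr (ne_of_gt (hx (by omega)))
    field_simp
    ring
  rw [finsum_congr key, ← mul_finsum _ t,
    IH, ← pow_succ']

lemma step_odd (x : ℤ → ℝ) (hx : StrictMono x)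
    (htop : Filter.Tendsto x Filter.atTop Filter.atTop)
    (hbot : Filter.Tendsto x Filter.atBot Filter.atBot) (t : ℝ) (q : ℕ)
    (IH : ∑ᶠ k : ℤ, knotProd x (-(q : ℤ)) ((q : ℤ)) k * Bspline x (q + q + 2) k t
      = t ^ (q + q + 1)) :
    ∑ᶠ k : ℤ, knotProd x (-(q : ℤ)) ((q : ℤ) + 1) k * Bspline x (q + q + 1 + 2) k t
      = t ^ (q + q + 2) := by
  have hfin : ∀ (f : ℤ → ℝ) (d : ℤ),
      (Function.support fun k : ℤ => f k * Bspline x (q + q + 2) (k + d) t).Finite :=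
    mul_bspline_finite x hx htop hbot (q + q + 2) t
  have hfin2 : ∀ (g : ℤ → ℝ) (d : ℤ),
      (∀ k : ℤ, Bspline x (q + q + 2) (k + d) t = 0 → g k = 0) →
      (Function.support g).Finite := by
    intro g d h
    refine Set.Finite.subset (Set.Finite.preimage (Set.injOn_of_injective
      (add_left_injective d)) (bspline_finite x hx htop hbot (q + q + 2) t)) ?_
    intro k hk
    simp only [Set.mem_preimage, Set.mem_setOf_eq]
    intro h0
    exact hk (h k h0)
  conv_lhs => rw [finsum_congr (fun k : ℤ => by rw [Bspline] : ∀ k : ℤ, knotProd x (-(q : ℤ)) ((q : ℤ) + 1) k * Bspline x (q + q + 1 + 2) k t = knotProd x (-(q : ℤ)) ((q : ℤ) + 1) k * ((t - x (k - ((q + q + 1 + 2) / 2 : ℕ))) / (x (k + ((q + q + 1 + 3) / 2 : ℕ) - 1) - x (k - ((q + q + 1 + 2) / 2 : ℕ))) * Bspline x (q + q + 1 + 1) (k - 1 + ((q + q + 1 + 2) % 2 : ℕ)) t + (x (k + ((q + q + 1 + 3) / 2 : ℕ)) - t) / (x (k + ((q + q + 1 + 3) / 2 : ℕ)) - x (k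 - ((q + q + 1 + 2) / 2 : ℕ) + 1)) * Bspline x (q + q + 1 + 1) (k + ((q + q + 1 + 2) % 2 : ℕ)) t))]
  simp only [show (q + q + 1 + 2) / 2 = q + 1 from by omega,
    show (q + q + 1 + 3) / 2 = q + 2 from by omega,
    show (q + q + 1 + 2) % 2 = 1 from by omega,
    show q + q + 1 + 1 = q + q + 2 from by omega]
  push_cast
  have e1 : ∀ k : ℤ, knotProd x (-(q : ℤ)) ((q : ℤ) + 1) k *
      ((t - x (k - ((q : ℤ) + 1))) / (x (k + ((q : ℤ) + 2) - 1) - x (k - ((q : ℤ) + 1))) *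
        Bspline x (q + q + 2) (k - 1 + 1) t +
      (x (k + ((q : ℤ) + 2)) - t) / (x (k + ((q : ℤ) + 2)) - x (k - ((q : ℤ) + 1) + 1)) *
        Bspline x (q + q + 2) (k + 1) t) =
      (fun k : ℤ => (knotProd x (-(q : ℤ)) ((q : ℤ) + 1) k *
        ((t - x (k - ((q : ℤ) + 1))) / (x (k + ((q : ℤ) + 2) - 1) - x (k - ((q : ℤ) + 1))))) *
        Bspline x (q + q + 2) (k + 0) t) k +
      (fun k : ℤ => (knotProd x (-(q : ℤ)) ((q : ℤ) + 1) k *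
        ((x (k + ((q : ℤ) + 2)) - t) / (x (k + ((q : ℤ) + 2)) - x (k - ((q : ℤ) + 1) + 1)))) *
        Bspline x (q + q + 2) (k + 1) t) k := by
    intro k
    simp only []
    rw [show k + (0 : ℤ) = k - 1 + 1 by ring]
    ring
  rw [finsum_congr e1, finsum_add_distrib (hfin _ 0) (hfin _ 1)]
  nth_rewrite 2 [← finsum_comp_equiv (Equiv.addRight (-1 : ℤ))]
  simp only [Equiv.coe_addRight]
  rw [← finsum_add_distrib (hfin _ 0)
    (hfin2 _ 0 (fun k h0 => by
      rw [show k + (0 : ℤ) = k + -1 + 1 by ring] at h0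
      rw [h0, mul_zero]))]
  have key : ∀ i : ℤ,
      knotProd x (-(q : ℤ)) ((q : ℤ) + 1) i *
        ((t - x (i - ((q : ℤ) + 1))) / (x (i + ((q : ℤ) + 2) - 1) - x (i - ((q : ℤ) + 1)))) *
        Bspline x (q + q + 2) (i + 0) t +
      knotProd x (-(q : ℤ)) ((q : ℤ) + 1) (i + -1) *
        ((x (i + -1 + ((q : ℤ) + 2)) - t) /
          (x (i + -1 + ((q : ℤ) + 2)) - x (i + -1 - ((q : ℤ) + 1) + 1))) *
        Bspline x (q + q + 2) (i + -1 + 1) t =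
      t * (knotProd x (-(q : ℤ)) ((q : ℤ)) i * Bspline x (q + q + 2) i t) := by
    intro i
    rw [show i + (0 : ℤ) = i by ring, show i + -1 + (1 : ℤ) = i by ring,
      show i + ((q : ℤ) + 2) - 1 = i + ((q : ℤ) + 1) by ring,
      show i + -1 + ((q : ℤ) + 2) = i + ((q : ℤ) + 1) by ring,
      show i + -1 - ((q : ℤ) + 1) + 1 = i - ((q : ℤ) + 1) by ring]
    rw [knotProd_top x (-(q : ℤ)) ((q : ℤ)) i (by omega)]
    rw [show knotProd x (-(q : ℤ)) ((q : ℤ) + 1) (i + -1)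
        = x (i - ((q : ℤ) + 1)) * knotProd x (-(q : ℤ)) ((q : ℤ)) i by
      rw [knotProd_shift x (-(q : ℤ)) ((q : ℤ) + 1) i (-1),
        show -(q : ℤ) + -1 = -(q : ℤ) - 1 by ring,
        show (q : ℤ) + 1 + -1 = (q : ℤ) by ring,
        knotProd_bot x (-(q : ℤ)) ((q : ℤ)) i (by omega),
        show i + (-(q : ℤ) - 1) = i - ((q : ℤ) + 1) by ring]]
    have h0 : x (i + ((q : ℤ) + 1)) - x (i - ((q : ℤ) + 1)) ≠ 0 :=
      sub_ne_zero.mpr (ne_of_gt (hx (by omega)))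
    field_simp
    ring
  rw [finsum_congr key, ← mul_finsum _ t,
    IH, ← pow_succ']

lemma bspline_sum (x : ℤ → ℝ) (hx : StrictMono x)
    (htop : Filter.Tendsto x Filter.atTop Filter.atTop)
    (hbot : Filter.Tendsto x Filter.atBot Filter.atBot) (t : ℝ) :
    ∀ p : ℕ, 1 ≤ p →
      ∑ᶠ k : ℤ, knotProd x (1 - ((p / 2 : ℕ) : ℤ)) ((((p + 1) / 2 : ℕ) : ℤ) - 1) k *
        Bspline x p k t = t ^ (p - 1) := by
  intro p hp
  induction p, hp using Nat.le_induction with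
  | base =>
    obtain ⟨j, hj1, hj2⟩ := exists_knot_interval x hx htop hbot t
    have hco : ∀ k : ℤ, knotProd x (1 - ((1 / 2 : ℕ) : ℤ)) ((((1 + 1) / 2 : ℕ) : ℤ) - 1) k
        = 1 := by
      intro k
      unfold knotProd
      rw [Finset.Icc_eq_empty (by norm_num : ¬ ((1 - ((1 / 2 : ℕ) : ℤ)) ≤ (((1 + 1) / 2 : ℕ) : ℤ) - 1)), Finset.prod_empty]
    simp only [hco, one_mul]
    have hval : ∀ k : ℤ, k ≠ j → Bspline x 1 k t = 0 := by
      intro k hk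
      simp only [Bspline, ite_eq_right_iff, one_ne_zero]
      intro hc
      exfalso
      have h1 := hx.lt_iff_lt.mp (lt_of_le_of_lt hc.1 hj2)
      have h2 := hx.lt_iff_lt.mp (lt_of_le_of_lt hj1 hc.2)
      omega
    rw [finsum_eq_single _ j hval]
    simp only [Bspline, if_pos (⟨hj1, hj2⟩ : x j ≤ t ∧ t < x (j + 1))]
    norm_num
  | succ n hn IH =>
    rcases Nat.even_or_odd n with ⟨r, hr⟩ | ⟨r, hr⟩
    · -- n even, n = q + q + 2, use step_odd
      obtain ⟨q, rfl⟩ : ∃ q, n = q + q + 2 := ⟨r - 1, by omega⟩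
      have IH' : ∑ᶠ k : ℤ, knotProd x (-(q : ℤ)) ((q : ℤ)) k * Bspline x (q + q + 2) k t
          = t ^ (q + q + 1) := by
        have e : ∀ k : ℤ, knotProd x (-(q : ℤ)) ((q : ℤ)) k * Bspline x (q + q + 2) k t
            = knotProd x (1 - (((q + q + 2) / 2 : ℕ) : ℤ))
              (((((q + q + 2) + 1) / 2 : ℕ) : ℤ) - 1) k * Bspline x (q + q + 2) k t := by
          intro k
          congr 2 <;> push_cast <;> omega
        rw [finsum_congr e, IH]
        norm_num
      have hstep := step_odd x hx htop hbot t q IH'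
      have e2 : ∀ k : ℤ, knotProd x (1 - (((q + q + 2 + 1) / 2 : ℕ) : ℤ))
          (((((q + q + 2 + 1) + 1) / 2 : ℕ) : ℤ) - 1) k * Bspline x (q + q + 2 + 1) k t
          = knotProd x (-(q : ℤ)) ((q : ℤ) + 1) k * Bspline x (q + q + 1 + 2) k t := by
        intro k
        rw [show q + q + 2 + 1 = q + q + 1 + 2 from by omega]
        congr 2 <;> push_cast <;> omega
      rw [finsum_congr e2, hstep]
      norm_num
    · -- n odd, n = q + q + 1, use step_even
      obtain ⟨q, rfl⟩ : ∃ q, n = q + q + 1 := ⟨r, by omega⟩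
      have IH' : ∑ᶠ k : ℤ, knotProd x (1 - (q : ℤ)) ((q : ℤ)) k * Bspline x (q + q + 1) k t
          = t ^ (q + q) := by
        have e : ∀ k : ℤ, knotProd x (1 - (q : ℤ)) ((q : ℤ)) k * Bspline x (q + q + 1) k t
            = knotProd x (1 - (((q + q + 1) / 2 : ℕ) : ℤ))
              (((((q + q + 1) + 1) / 2 : ℕ) : ℤ) - 1) k * Bspline x (q + q + 1) k t := by
          intro k
          congr 2 <;> push_cast <;> omega
        rw [finsum_congr e, IH]
        norm_num
      have hstep := step_even x hx htop hbot t q IH'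
      have e2 : ∀ k : ℤ, knotProd x (1 - (((q + q + 1 + 1) / 2 : ℕ) : ℤ))
          (((((q + q + 1 + 1) + 1) / 2 : ℕ) : ℤ) - 1) k * Bspline x (q + q + 1 + 1) k t
          = knotProd x (-(q : ℤ)) ((q : ℤ)) k * Bspline x (q + q + 2) k t := by
        intro k
        rw [show q + q + 1 + 1 = q + q + 2 from by omega]
        congr 2 <;> push_cast <;> omega
      rw [finsum_congr e2, hstep]
      norm_num


/-- reproduction of the power of maximal degree: for every `p ≥ 2`
and every `t`, `t^{p-1} = ∑ₖ [∏_{i=1-⌊p/2⌋}^{⌈p/2⌉-1} x_{k+i}] φ_k^[p](t)`, the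
sum having only finitely many nonzero terms. -/
theorem bspline_reproduces_top_power
    (x : ℤ → ℝ) (hx : StrictMono x)
    (htop : Filter.Tendsto x Filter.atTop Filter.atTop)
    (hbot : Filter.Tendsto x Filter.atBot Filter.atBot)
    (p : ℕ) (hp : 2 ≤ p) (t : ℝ) :
    {k : ℤ | (∏ i ∈ Finset.Icc (1 - ((p / 2 : ℕ) : ℤ)) (((p + 1) / 2 : ℕ) - 1), x (k + i)) *
        Bspline x p k t ≠ 0}.Finite ∧
    t ^ (p - 1) = ∑ᶠ k : ℤ,
      (∏ i ∈ Finset.Icc (1 - ((p / 2 : ℕ) : ℤ)) (((p + 1) / 2 : ℕ) - 1), x (k + i)) *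
        Bspline x p k t := by
  constructor
  · refine Set.Finite.subset (bspline_finite x hx htop hbot p t) ?_
    intro k hk
    simp only [Set.mem_setOf_eq] at hk ⊢
    exact fun h0 => hk (by rw [h0, mul_zero])
  · exact (bspline_sum x hx htop hbot t p (by omega)).symm
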